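/- Let $\delta > 0$, $h > 0$, $\lambda > 0$, and let $\tau \ge 0$ be a random variable satisfying $\frac{1}{h}\int_0^\infty e^{(s-\delta)/h} P(\tau \ge s/\lambda)\,ds \ge 1$. Let $g : \mathbb{R} \to (0,\infty)$ with $\int_{\mathbb{R}} g(t) e^t\,dt < \infty$. Then for every $\epsilon_1 > 0$ and every $\epsilon \in (0,1)$, if $h$ is small enough (so that the contribution of $t < -h^{-\epsilon}$ is at most $\epsilon_1$), there exists $s(h) \ge \delta - h^{1-\epsilon}$ such that $P(\tau \ge s(h)/\lambda) \ge \left(\frac{1-2\epsilon_1}{\int g(t)e^t dt}\right) g\!\left(\frac{s(h)-\delta}{h}\right)$. -/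

import Mathlib

open MeasureTheory Set Real

theorem stmt_19 {α : Type*} [MeasurableSpace α] (μ : Measure α) [IsProbabilityMeasure μ]
    (τ : α → ℝ) (hτmeas : Measurable τ) (hτ0 : ∀ a, 0 ≤ τ a)
    (δ h lam : ℝ) (hδ : 0 < δ) (hh : 0 < h) (hlam : 0 < lam)
    (hlower : 1 ≤ (1 / h) * ∫ s in Ioi (0:ℝ),
      Real.exp ((s - δ) / h) * (μ {a | s / lam ≤ τ a}).toReal)
    (g : ℝ → ℝ) (hgpos : ∀ t, 0 < g t)
    (hgint : Integrable (fun t => g t * Real.exp t))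
    (ε₁ ε : ℝ) (hε₁ : 0 < ε₁) (hε : ε ∈ Ioo (0:ℝ) 1)
    (hsmall : (∫ t in Iio (-(h ^ (-ε))),
        Real.exp t * (μ {a | (h * t + δ) / lam ≤ τ a}).toReal) ≤ ε₁) :
    ∃ s : ℝ, δ - h ^ (1 - ε) ≤ s ∧
      ((1 - 2 * ε₁) / ∫ t, g t * Real.exp t) * g ((s - δ) / h) ≤
        (μ {a | s / lam ≤ τ a}).toReal := by
  classical
  -- basic facts about the tail probability
  have hPanti : Antitone (fun x : ℝ => (μ {a | x ≤ τ a}).toReal) := by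
    intro x y hxy
    exact ENNReal.toReal_mono (measure_ne_top μ _)
      (measure_mono fun a ha => le_trans hxy ha)
  have hPmeas : Measurable (fun x : ℝ => (μ {a | x ≤ τ a}).toReal) :=
    hPanti.measurable
  have hP0 : ∀ x : ℝ, 0 ≤ (μ {a | x ≤ τ a}).toReal := fun x => ENNReal.toReal_nonneg
  have hP1 : ∀ x : ℝ, (μ {a | x ≤ τ a}).toReal ≤ 1 := by
    intro x
    have h1 : μ {a | x ≤ τ a} ≤ 1 := prob_le_one
    simpa using ENNReal.toReal_mono ENNReal.one_ne_top h1
  set I := ∫ t, g t * Real.exp t with hIdef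
  have hIpos : 0 < I := by
    rw [hIdef]
    refine (integral_pos_iff_support_of_nonneg_ae ?_ hgint).2 ?_
    · exact ae_of_all _ fun t => (mul_pos (hgpos t) (exp_pos t)).le
    · have : Function.support (fun t => g t * Real.exp t) = univ := by
        ext t
        simp only [Function.mem_support, mem_univ, iff_true]
        exact (mul_pos (hgpos t) (exp_pos t)).ne'
      simp [this]
  rcases le_or_gt (1 - 2 * ε₁) 0 with hC | hC
  · refine ⟨δ, by nlinarith [Real.rpow_nonneg hh.le (1 - ε)], ?_⟩
    have hdiv : (1 - 2 * ε₁) / I ≤ 0 := div_nonpos_of_nonpos_of_nonneg hC hIpos.le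
    have := mul_nonpos_of_nonpos_of_nonneg hdiv (hgpos ((δ - δ) / h)).le
    exact le_trans this (hP0 _)
  by_contra hcon
  push_neg at hcon
  set C := (1 - 2 * ε₁) / I with hCdef
  have hCpos : 0 ≤ C := div_nonneg hC.le hIpos.le
  set F : ℝ → ℝ := fun t => Real.exp t * (μ {a | (h * t + δ) / lam ≤ τ a}).toReal with hFdef
  set f : ℝ → ℝ := fun s => Real.exp ((s - δ) / h) * (μ {a | s / lam ≤ τ a}).toReal with hfdef
  set G : ℝ → ℝ := (Ioi (0:ℝ)).indicator f with hGdef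
  have hGF : ∀ t : ℝ, G (h * t + δ) = (Ioi (-δ / h)).indicator F t := by
    intro t
    have hiff : -δ / h < t ↔ (0:ℝ) < h * t + δ := by
      rw [div_lt_iff₀ hh]
      constructor <;> intro hx <;> nlinarith
    by_cases ht : t ∈ Ioi (-δ / h)
    · simp only [hGdef]
      rw [indicator_of_mem ht, indicator_of_mem (show h * t + δ ∈ Ioi (0:ℝ) from hiff.1 ht)]
      simp only [hfdef, hFdef]
      congr 2
      field_simp
      ring
    · simp only [hGdef]
      rw [indicator_of_notMem ht,
        indicator_of_notMem (show h * t + δ ∉ Ioi (0:ℝ) from fun hx => ht (hiff.2 hx))]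
  -- integrability of G from hlower
  have hfi : Integrable G := by
    by_contra hfi
    rw [← integral_indicator measurableSet_Ioi, ← hGdef, integral_undef hfi] at hlower
    simp at hlower
    linarith
  have hint : Integrable (fun t => G (h * t + δ)) := by
    have h1 : Integrable (fun u => G (u + δ)) := hfi.comp_add_right δ
    exact (integrable_comp_mul_left_iff (fun u => G (u + δ)) hh.ne').2 h1
  have hFIoi : IntegrableOn F (Ioi (-δ / h)) := by
    rw [← integrable_indicator_iff measurableSet_Ioi]
    have : (Ioi (-δ / h)).indicator F = fun t => G (h * t + δ) := by
      funext t; exact (hGF t).symm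
    rw [this]
    exact hint
  have hFmeas : Measurable F := by
    apply Measurable.mul measurable_exp
    exact hPmeas.comp (by fun_prop)
  have hFnonneg : ∀ t, 0 ≤ F t := fun t => mul_nonneg (exp_pos t).le (hP0 _)
  have hFIic : IntegrableOn F (Iic (-δ / h)) := by
    refine Integrable.mono' (integrableOn_exp_Iic (-δ / h))
      hFmeas.aestronglyMeasurable.restrict (ae_of_all _ fun t => ?_)
    rw [Real.norm_eq_abs, abs_of_nonneg (hFnonneg t)]
    calc F t ≤ Real.exp t * 1 := mul_le_mul_of_nonneg_left (hP1 _) (exp_pos t).le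
      _ = Real.exp t := mul_one _
  have hFint : Integrable F := by
    rw [← integrableOn_univ, ← Iic_union_Ioi (a := -δ / h)]
    exact hFIic.union hFIoi
  -- change of variables: value
  have hval : (1:ℝ) ≤ ∫ t in Ioi (-δ / h), F t := by
    have e1 : ∫ t in Ioi (-δ / h), F t = ∫ t, G (h * t + δ) := by
      rw [← integral_indicator measurableSet_Ioi]
      congr 1; funext t; exact (hGF t).symm
    have e2 : (∫ t, G (h * t + δ)) = |h⁻¹| • ∫ u, G (u + δ) :=
      MeasureTheory.Measure.integral_comp_mul_left (fun u => G (u + δ)) h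
    have e3 : (∫ u, G (u + δ)) = ∫ u, G u := integral_add_right_eq_self G δ
    have e4 : (∫ u, G u) = ∫ s in Ioi (0:ℝ), f s := integral_indicator measurableSet_Ioi
    rw [e1, e2, e3, e4, abs_of_pos (inv_pos.2 hh), smul_eq_mul]
    calc (1:ℝ) ≤ (1 / h) * ∫ s in Ioi (0:ℝ), f s := hlower
      _ = h⁻¹ * ∫ s in Ioi (0:ℝ), f s := by rw [one_div]
  -- pointwise bound on Ici
  set c := -(h ^ (-ε)) with hcdef
  have hbound : ∀ t ∈ Ici c, F t ≤ C * (g t * Real.exp t) := by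
    intro t ht
    have hct : c ≤ t := ht
    have hpow : h * h ^ (-ε) = h ^ (1 - ε) := by
      rw [show (1 : ℝ) - ε = 1 + (-ε) by ring, Real.rpow_add hh, Real.rpow_one]
    have hs : δ - h ^ (1 - ε) ≤ h * t + δ := by
      have h2 : h * c ≤ h * t := mul_le_mul_of_nonneg_left hct hh.le
      have h3 : h * c = -(h ^ (1 - ε)) := by rw [hcdef]; rw [mul_neg, hpow]
      linarith
    have hlt := hcon (h * t + δ) hs
    have harg : (h * t + δ - δ) / h = t := by field_simp; ring
    rw [harg] at hlt
    calc F t = Real.exp t * (μ {a | (h * t + δ) / lam ≤ τ a}).toReal := rfl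
      _ ≤ Real.exp t * (C * g t) := mul_le_mul_of_nonneg_left hlt.le (exp_pos t).le
      _ = C * (g t * Real.exp t) := by ring
  -- integral bounds
  have hIci : ∫ t in Ici c, F t ≤ 1 - 2 * ε₁ := by
    have h1 : ∫ t in Ici c, F t ≤ ∫ t in Ici c, C * (g t * Real.exp t) := by
      refine setIntegral_mono_on hFint.integrableOn
        ((hgint.const_mul C).integrableOn) measurableSet_Ici hbound
    have h2 : ∫ t in Ici c, C * (g t * Real.exp t)
        = C * ∫ t in Ici c, g t * Real.exp t := by
      rw [integral_const_mul]
    have h3 : ∫ t in Ici c, g t * Real.exp t ≤ I :=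
      setIntegral_le_integral hgint
        (ae_of_all _ fun t => (mul_pos (hgpos t) (exp_pos t)).le)
    have h4 : C * I = 1 - 2 * ε₁ := div_mul_cancel₀ _ hIpos.ne'
    calc ∫ t in Ici c, F t ≤ C * ∫ t in Ici c, g t * Real.exp t := by rw [← h2]; exact h1
      _ ≤ C * I := mul_le_mul_of_nonneg_left h3 hCpos
      _ = 1 - 2 * ε₁ := h4
  have htot : ∫ t, F t = (∫ t in Iio c, F t) + ∫ t in Ici c, F t :=
    (intervalIntegral.integral_Iio_add_Ici hFint.integrableOn hFint.integrableOn).symm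
  have hle : ∫ t in Ioi (-δ / h), F t ≤ ∫ t, F t :=
    setIntegral_le_integral hFint (ae_of_all _ hFnonneg)
  have : (1:ℝ) ≤ ε₁ + (1 - 2 * ε₁) := by
    calc (1:ℝ) ≤ ∫ t in Ioi (-δ / h), F t := hval
      _ ≤ ∫ t, F t := hle
      _ = (∫ t in Iio c, F t) + ∫ t in Ici c, F t := htot
      _ ≤ ε₁ + (1 - 2 * ε₁) := add_le_add hsmall hIci
  linarith
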